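/- Let (Ω, μ) be a probability space, D : ℝ^d → ℝ^d, δ ≥ 0, σ ≥ 0, and let g : ℝ^d × Ω → ℝ^d satisfy: (i) for μ-almost every ω the map x ↦ g(x, ω) is δ-Lipschitz, (ii) ∫ g(x, ω) dμ(ω) = D(x) for every x, and (iii) ∫ ‖g(x, ω) − D(x)‖² dμ(ω) ≤ σ² for every x. Let a ∈ [0,1] and e, u, v ∈ ℝ^d, and define e⁺(ω) = (1−a)e + a(g(v,ω) − D(v)) + (1−a)(g(v,ω) − D(v) − g(u,ω) + D(u)). Then ∫ ‖e⁺(ω)‖² dμ(ω) ≤ (1−a)²‖e‖² + 2a²σ² + 2δ²‖v − u‖². -/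

import Mathlib

set_option maxHeartbeats 1000000
open MeasureTheory

section helpers
variable {E : Type*} [NormedAddCommGroup E] [InnerProductSpace ℝ E] [CompleteSpace E]
  {Ω : Type*} [MeasurableSpace Ω] {μ : Measure Ω} [IsProbabilityMeasure μ]

/-- Second-moment bound: variance around the mean is at most the a.e. bound squared. -/
lemma var_le_bound_sq {X : Ω → E} (hX : Integrable X μ) (C : ℝ) (hC : 0 ≤ C)
    (hb : ∀ᵐ ω ∂μ, ‖X ω‖ ≤ C) :
    ∫ ω, ‖X ω - ∫ ω', X ω' ∂μ‖ ^ 2 ∂μ ≤ C ^ 2 := by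
  set m := ∫ ω', X ω' ∂μ with hm
  have hsq_int : Integrable (fun ω => ‖X ω‖ ^ 2) μ := by
    refine Integrable.mono' (integrable_const (C ^ 2)) ?_ ?_
    · exact (hX.aestronglyMeasurable.norm.pow 2)
    · filter_upwards [hb] with ω h
      rw [Real.norm_eq_abs, abs_of_nonneg (by positivity)]
      exact pow_le_pow_left₀ (norm_nonneg _) h 2
  have hinner_int : Integrable (fun ω => (inner ℝ (X ω) m : ℝ)) μ := by
    simpa [real_inner_comm] using hX.inner_const m
  have hmean : ∫ ω, (inner ℝ (X ω) m : ℝ) ∂μ = ‖m‖ ^ 2 := by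
    have : ∫ ω, (inner ℝ m (X ω) : ℝ) ∂μ = inner ℝ m m := integral_inner hX m
    simpa [real_inner_comm, real_inner_self_eq_norm_sq] using this
  have hexp : ∀ ω, ‖X ω - m‖ ^ 2 = ‖X ω‖ ^ 2 - 2 * inner ℝ (X ω) m + ‖m‖ ^ 2 :=
    fun ω => norm_sub_sq_real _ _
  have hsqX : ∫ ω, ‖X ω‖ ^ 2 ∂μ ≤ C ^ 2 := by
    calc ∫ ω, ‖X ω‖ ^ 2 ∂μ ≤ ∫ _ω, C ^ 2 ∂μ := by
          refine integral_mono_ae hsq_int (integrable_const _) ?_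
          filter_upwards [hb] with ω h
          exact pow_le_pow_left₀ (norm_nonneg _) h 2
      _ = C ^ 2 := by simp
  have h2int : Integrable (fun ω => 2 * (inner ℝ (X ω) m : ℝ)) μ := hinner_int.const_mul 2
  have h1 : Integrable (fun ω => ‖X ω‖ ^ 2 - 2 * (inner ℝ (X ω) m : ℝ)) μ := by
    exact hsq_int.sub h2int
  have : ∫ ω, ‖X ω - m‖ ^ 2 ∂μ
      = ∫ ω, ‖X ω‖ ^ 2 ∂μ - 2 * ‖m‖ ^ 2 + ‖m‖ ^ 2 := by
    simp_rw [hexp]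
    rw [integral_add h1 (integrable_const _), integral_sub hsq_int h2int,
      integral_const_mul, hmean]
    simp
  rw [this]
  nlinarith [sq_nonneg ‖m‖]

end helpers

/-- one-round bound for the momentum error of the MVR
(momentum-based variance reduction) update, where `g(·, ω)` is an almost surely
δ-Lipschitz unbiased estimator of `D` with variance at most `σ²`. -/
theorem stmt_10 {d : ℕ} {Ω : Type*} [MeasurableSpace Ω]
    (μ : Measure Ω) [IsProbabilityMeasure μ]
    (D : EuclideanSpace ℝ (Fin d) → EuclideanSpace ℝ (Fin d))
    (δ σ : ℝ) (hδ : 0 ≤ δ) (hσ : 0 ≤ σ)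
    (g : EuclideanSpace ℝ (Fin d) → Ω → EuclideanSpace ℝ (Fin d))
    (hint : ∀ x, Integrable (g x) μ)
    (hlip : ∀ᵐ ω ∂μ, ∀ x y : EuclideanSpace ℝ (Fin d),
      ‖g x ω - g y ω‖ ≤ δ * ‖x - y‖)
    (hunbiased : ∀ x, ∫ ω, g x ω ∂μ = D x)
    (hvar : ∀ x, ∫ ω, ‖g x ω - D x‖ ^ 2 ∂μ ≤ σ ^ 2)
    (a : ℝ) (ha0 : 0 ≤ a) (ha1 : a ≤ 1)
    (e u v : EuclideanSpace ℝ (Fin d))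
    (eplus : Ω → EuclideanSpace ℝ (Fin d))
    (heplus : ∀ ω, eplus ω = (1 - a) • e + a • (g v ω - D v)
      + (1 - a) • (g v ω - D v - g u ω + D u)) :
    ∫ ω, ‖eplus ω‖ ^ 2 ∂μ
      ≤ (1 - a) ^ 2 * ‖e‖ ^ 2 + 2 * a ^ 2 * σ ^ 2 + 2 * δ ^ 2 * ‖v - u‖ ^ 2 := by
  set A : Ω → EuclideanSpace ℝ (Fin d) := fun ω => g v ω - D v with hA_def
  set B : Ω → EuclideanSpace ℝ (Fin d) := fun ω => (g v ω - g u ω) - (D v - D u) with hB_def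
  set X : Ω → EuclideanSpace ℝ (Fin d) := fun ω => g v ω - g u ω with hX_def
  have hA_int : Integrable A μ := (hint v).sub (integrable_const _)
  have hX_int : Integrable X μ := (hint v).sub (hint u)
  have hB_int : Integrable B μ := hX_int.sub (integrable_const _)
  have hA_mean : ∫ ω, A ω ∂μ = 0 := by
    rw [hA_def]
    rw [integral_sub (hint v) (integrable_const _), hunbiased, integral_const]
    simp
  have hX_mean : ∫ ω, X ω ∂μ = D v - D u := by
    rw [hX_def, integral_sub (hint v) (hint u), hunbiased, hunbiased]
  have hB_mean : ∫ ω, B ω ∂μ = 0 := by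
    rw [hB_def, integral_sub hX_int (integrable_const _), hX_mean, integral_const]
    simp
  have hXbound : ∀ᵐ ω ∂μ, ‖X ω‖ ≤ δ * ‖v - u‖ := by
    filter_upwards [hlip] with ω h using h v u
  have hBsq : ∫ ω, ‖B ω‖ ^ 2 ∂μ ≤ (δ * ‖v - u‖) ^ 2 := by
    have := var_le_bound_sq hX_int (δ * ‖v - u‖) (by positivity) hXbound
    rwa [hX_mean] at this
  have hBbound : ∀ᵐ ω ∂μ, ‖B ω‖ ≤ 2 * (δ * ‖v - u‖) := by
    filter_upwards [hXbound] with ω h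
    have hm : ‖D v - D u‖ ≤ δ * ‖v - u‖ := by
      rw [← hX_mean]
      calc ‖∫ ω, X ω ∂μ‖ ≤ ∫ ω, ‖X ω‖ ∂μ := norm_integral_le_integral_norm _
        _ ≤ ∫ _ω, δ * ‖v - u‖ ∂μ :=
            integral_mono_ae hX_int.norm (integrable_const _) hXbound
        _ = δ * ‖v - u‖ := by simp
    calc ‖B ω‖ ≤ ‖X ω‖ + ‖D v - D u‖ := norm_sub_le _ _
      _ ≤ 2 * (δ * ‖v - u‖) := by linarith
  have hBsq_int : Integrable (fun ω => ‖B ω‖ ^ 2) μ := by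
    refine Integrable.mono' (integrable_const ((2 * (δ * ‖v - u‖)) ^ 2))
      (hB_int.aestronglyMeasurable.norm.pow 2) ?_
    filter_upwards [hBbound] with ω h
    rw [Real.norm_eq_abs, abs_of_nonneg (by positivity)]
    exact pow_le_pow_left₀ (norm_nonneg _) h 2
  set c : EuclideanSpace ℝ (Fin d) := (1 - a) • e with hc_def
  set Y : Ω → EuclideanSpace ℝ (Fin d) := fun ω => a • A ω + (1 - a) • B ω with hY_def
  have heq : ∀ ω, eplus ω = c + Y ω := by
    intro ω
    rw [heplus ω]
    simp only [hY_def, hA_def, hB_def, hc_def]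
    module
  have haA_int : Integrable (fun ω => a • A ω) μ := by exact hA_int.smul a
  have haB_int : Integrable (fun ω => (1 - a) • B ω) μ := by exact hB_int.smul (1 - a)
  have hY_int : Integrable Y μ := by rw [hY_def]; exact haA_int.add haB_int
  have hY_mean : ∫ ω, Y ω ∂μ = 0 := by
    rw [hY_def, integral_add haA_int haB_int, integral_smul, integral_smul,
      hA_mean, hB_mean]
    simp
  have hYptw : ∀ ω, ‖Y ω‖ ^ 2 ≤ 2 * a ^ 2 * ‖A ω‖ ^ 2 + 2 * (1 - a) ^ 2 * ‖B ω‖ ^ 2 := by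
    intro ω
    have h1 : ‖Y ω‖ ≤ a * ‖A ω‖ + (1 - a) * ‖B ω‖ := by
      calc ‖Y ω‖ ≤ ‖a • A ω‖ + ‖(1 - a) • B ω‖ := norm_add_le _ _
        _ = a * ‖A ω‖ + (1 - a) * ‖B ω‖ := by
            rw [norm_smul, norm_smul, Real.norm_eq_abs, Real.norm_eq_abs,
              abs_of_nonneg ha0, abs_of_nonneg (by linarith)]
    nlinarith [norm_nonneg (Y ω), norm_nonneg (A ω), norm_nonneg (B ω),
      sq_nonneg (a * ‖A ω‖ - (1 - a) * ‖B ω‖)]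
  have key : ∀ (_ : Integrable (fun ω => ‖Y ω‖ ^ 2) μ)
      (_ : ∫ ω, ‖Y ω‖ ^ 2 ∂μ ≤ 2 * a ^ 2 * σ ^ 2 + 2 * (1 - a) ^ 2 * (δ * ‖v - u‖) ^ 2),
      ∫ ω, ‖eplus ω‖ ^ 2 ∂μ
        ≤ (1 - a) ^ 2 * ‖e‖ ^ 2 + 2 * a ^ 2 * σ ^ 2 + 2 * δ ^ 2 * ‖v - u‖ ^ 2 := by
    intro hYsq_int hYsq
    have hinner_int : Integrable (fun ω => (inner ℝ c (Y ω) : ℝ)) μ := hY_int.const_inner c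
    have h2inner_int : Integrable (fun ω => 2 * (inner ℝ c (Y ω) : ℝ)) μ :=
      hinner_int.const_mul 2
    have hc2_int : Integrable (fun ω => ‖c‖ ^ 2 + 2 * (inner ℝ c (Y ω) : ℝ)) μ := by
      exact (integrable_const _).add h2inner_int
    have hsplit : ∫ ω, ‖eplus ω‖ ^ 2 ∂μ
        = ‖c‖ ^ 2 + 2 * ∫ ω, (inner ℝ c (Y ω) : ℝ) ∂μ + ∫ ω, ‖Y ω‖ ^ 2 ∂μ := by
      have hexp : ∀ ω, ‖eplus ω‖ ^ 2 = ‖c‖ ^ 2 + 2 * inner ℝ c (Y ω) + ‖Y ω‖ ^ 2 := by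
        intro ω; rw [heq ω]; exact norm_add_sq_real _ _
      simp_rw [hexp]
      rw [integral_add hc2_int hYsq_int,
        integral_add (integrable_const _) h2inner_int,
        integral_const, integral_const_mul]
      simp
    have hinner0 : ∫ ω, (inner ℝ c (Y ω) : ℝ) ∂μ = 0 := by
      rw [integral_inner hY_int, hY_mean, inner_zero_right]
    have hcnorm : ‖c‖ ^ 2 = (1 - a) ^ 2 * ‖e‖ ^ 2 := by
      rw [hc_def, norm_smul, mul_pow, Real.norm_eq_abs, sq_abs]
    rw [hsplit, hinner0, hcnorm]
    have h1a : (1 - a) ^ 2 ≤ 1 := by nlinarith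
    have hnn : (0:ℝ) ≤ (δ * ‖v - u‖) ^ 2 := by positivity
    have hlast : 2 * (1 - a) ^ 2 * (δ * ‖v - u‖) ^ 2 ≤ 2 * δ ^ 2 * ‖v - u‖ ^ 2 := by
      nlinarith
    linarith [hYsq]
  by_cases hAsq_int : Integrable (fun ω => ‖A ω‖ ^ 2) μ
  · have hAB_int : Integrable
        (fun ω => 2 * a ^ 2 * ‖A ω‖ ^ 2 + 2 * (1 - a) ^ 2 * ‖B ω‖ ^ 2) μ := by
      exact (hAsq_int.const_mul _).add (hBsq_int.const_mul _)
    have hYsq_int : Integrable (fun ω => ‖Y ω‖ ^ 2) μ := by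
      refine Integrable.mono' hAB_int (hY_int.aestronglyMeasurable.norm.pow 2) ?_
      filter_upwards with ω
      rw [Real.norm_eq_abs, abs_of_nonneg (by positivity)]
      exact hYptw ω
    have hAsq : ∫ ω, ‖A ω‖ ^ 2 ∂μ ≤ σ ^ 2 := hvar v
    have hYsq : ∫ ω, ‖Y ω‖ ^ 2 ∂μ
        ≤ 2 * a ^ 2 * σ ^ 2 + 2 * (1 - a) ^ 2 * (δ * ‖v - u‖) ^ 2 := by
      calc ∫ ω, ‖Y ω‖ ^ 2 ∂μ
          ≤ ∫ ω, (2 * a ^ 2 * ‖A ω‖ ^ 2 + 2 * (1 - a) ^ 2 * ‖B ω‖ ^ 2) ∂μ := by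
            refine integral_mono_ae hYsq_int hAB_int ?_
            filter_upwards with ω using hYptw ω
        _ = 2 * a ^ 2 * ∫ ω, ‖A ω‖ ^ 2 ∂μ + 2 * (1 - a) ^ 2 * ∫ ω, ‖B ω‖ ^ 2 ∂μ := by
            rw [integral_add (hAsq_int.const_mul _) (hBsq_int.const_mul _),
              integral_const_mul, integral_const_mul]
        _ ≤ 2 * a ^ 2 * σ ^ 2 + 2 * (1 - a) ^ 2 * (δ * ‖v - u‖) ^ 2 := by
            have h1 : (0:ℝ) ≤ 2 * a ^ 2 := by positivity
            have h2 : (0:ℝ) ≤ 2 * (1 - a) ^ 2 := by positivity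
            exact add_le_add (mul_le_mul_of_nonneg_left hAsq h1)
              (mul_le_mul_of_nonneg_left hBsq h2)
    exact key hYsq_int hYsq
  · by_cases ha : a = 0
    · -- a = 0 : Y = B
      have hYB : ∀ ω, Y ω = B ω := by
        intro ω; simp [hY_def, ha]
      have hYsq_int : Integrable (fun ω => ‖Y ω‖ ^ 2) μ := by
        simp only [hYB]; exact hBsq_int
      have hYsq : ∫ ω, ‖Y ω‖ ^ 2 ∂μ
          ≤ 2 * a ^ 2 * σ ^ 2 + 2 * (1 - a) ^ 2 * (δ * ‖v - u‖) ^ 2 := by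
        simp only [hYB, ha]
        have : (0:ℝ) ≤ (δ * ‖v - u‖) ^ 2 := by positivity
        nlinarith [hBsq]
      exact key hYsq_int hYsq
    · -- a ≠ 0 and ‖A‖² not integrable : ‖eplus‖² is not integrable either
      have ha_pos : 0 < a := lt_of_le_of_ne ha0 (Ne.symm ha)
      have hnotint : ¬ Integrable (fun ω => ‖eplus ω‖ ^ 2) μ := by
        intro hcon
        apply hAsq_int
        set K : ℝ := ‖c‖ + 2 * (δ * ‖v - u‖) with hK_def
        have hbound : ∀ᵐ ω ∂μ, ‖A ω‖ * a ≤ ‖eplus ω‖ + K := by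
          filter_upwards [hBbound] with ω hB
          have h1 : a • A ω = eplus ω - c - (1 - a) • B ω := by
            rw [heq ω, hY_def]; module
          have h2 : ‖a • A ω‖ = a * ‖A ω‖ := by
            rw [norm_smul, Real.norm_eq_abs, abs_of_nonneg ha0]
          have h3 : ‖(1 - a) • B ω‖ ≤ 2 * (δ * ‖v - u‖) := by
            rw [norm_smul, Real.norm_eq_abs, abs_of_nonneg (by linarith)]
            have hBnn : 0 ≤ ‖B ω‖ := norm_nonneg _
            nlinarith
          have h4 : ‖a • A ω‖ ≤ ‖eplus ω‖ + ‖c‖ + ‖(1 - a) • B ω‖ := by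
            rw [h1]
            calc ‖eplus ω - c - (1 - a) • B ω‖
                ≤ ‖eplus ω - c‖ + ‖(1 - a) • B ω‖ := norm_sub_le _ _
              _ ≤ ‖eplus ω‖ + ‖c‖ + ‖(1 - a) • B ω‖ := by
                  linarith [norm_sub_le (eplus ω) c]
          rw [h2] at h4
          rw [hK_def]; linarith
        refine Integrable.mono'
          (((hcon.add (integrable_const (K ^ 2))).const_mul (2 * a⁻¹ ^ 2)))
          (hA_int.aestronglyMeasurable.norm.pow 2) ?_
        filter_upwards [hbound] with ω h
        rw [Real.norm_eq_abs, abs_of_nonneg (by positivity)]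
        have hKnn : 0 ≤ K := by rw [hK_def]; positivity
        have h5 : (‖A ω‖ * a) ^ 2 ≤ 2 * ‖eplus ω‖ ^ 2 + 2 * K ^ 2 := by
          have h5a : (‖A ω‖ * a) ^ 2 ≤ (‖eplus ω‖ + K) ^ 2 :=
            pow_le_pow_left₀ (mul_nonneg (norm_nonneg _) ha0) h 2
          nlinarith [sq_nonneg (‖eplus ω‖ - K)]
        have h6 : ‖A ω‖ ^ 2 = a⁻¹ ^ 2 * (‖A ω‖ * a) ^ 2 := by
          field_simp
        rw [h6]
        calc a⁻¹ ^ 2 * (‖A ω‖ * a) ^ 2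
            ≤ a⁻¹ ^ 2 * (2 * ‖eplus ω‖ ^ 2 + 2 * K ^ 2) :=
              mul_le_mul_of_nonneg_left h5 (by positivity)
          _ = 2 * a⁻¹ ^ 2 * (‖eplus ω‖ ^ 2 + K ^ 2) := by ring
      rw [integral_undef hnotint]
      positivity
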